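/- The binary entropy function H is strictly concave on [0,1], and for any p ∈ (0,1/2), the function D ↦ H(p ∗ D) − H(D) is strictly decreasing in D on (0, 1/2). -/

import Mathlib

def binConv (p q : ℝ) : ℝ := p * (1 - q) + q * (1 - p)

noncomputable def binH (x : ℝ) : ℝ := -x * Real.logb 2 x - (1 - x) * Real.logb 2 (1 - x)

lemma binH_eq (x : ℝ) : binH x = (Real.log 2)⁻¹ * Real.binEntropy x := by
  unfold binH Real.binEntropy Real.logb
  rw [Real.log_inv, Real.log_inv]
  ring

lemma binH_fun_eq : binH = fun x => (Real.log 2)⁻¹ * Real.binEntropy x := funext binH_eq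

lemma log2_inv_pos : 0 < (Real.log 2)⁻¹ := by
  have := Real.log_pos (by norm_num : (1:ℝ) < 2)
  positivity

lemma hasDerivAt_binH {x : ℝ} (h0 : x ≠ 0) (h1 : x ≠ 1) :
    HasDerivAt binH ((Real.log 2)⁻¹ * (Real.log (1 - x) - Real.log x)) x := by
  rw [binH_fun_eq]
  exact (Real.hasDerivAt_binEntropy h0 h1).const_mul _

lemma continuous_binH : Continuous binH := by
  rw [binH_fun_eq]
  exact continuous_const.mul Real.binEntropy_continuous

theorem binH_strictConcave_and_rate_strictAnti :
    StrictConcaveOn ℝ (Set.Icc (0:ℝ) 1) binH ∧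
    ∀ p ∈ Set.Ioo (0:ℝ) (1/2),
      StrictAntiOn (fun D => binH (binConv p D) - binH D) (Set.Ioo (0:ℝ) (1/2)) := by
  have hc := log2_inv_pos
  constructor
  · refine ⟨convex_Icc _ _, fun x hx y hy hxy a b ha hb hab => ?_⟩
    have h := Real.strictConcave_binEntropy.2 hx hy hxy ha hb hab
    simp only [smul_eq_mul] at h ⊢
    rw [binH_eq, binH_eq, binH_eq]
    nlinarith
  · rintro p ⟨hp0, hp12⟩
    have h2p : 0 < 1 - 2 * p := by linarith
    have hconv : Continuous (fun D : ℝ => binConv p D) := by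
      unfold binConv; fun_prop
    refine strictAntiOn_of_deriv_neg (convex_Ioo _ _) ?_ ?_
    · exact ((continuous_binH.comp hconv).sub continuous_binH).continuousOn
    · intro x hx
      rw [interior_Ioo] at hx
      obtain ⟨hx0, hx12⟩ := hx
      set c := binConv p x with hcdef
      have hcx : x < c := by
        have : c - x = p * (1 - 2 * x) := by rw [hcdef]; unfold binConv; ring
        nlinarith
      have hc12 : c < 1/2 := by
        have : 1/2 - c = (1 - 2*p) * (1/2 - x) := by rw [hcdef]; unfold binConv; ring
        nlinarith
      have hc0 : (0:ℝ) < c := lt_trans hx0 hcx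
      have hlin : HasDerivAt (fun D : ℝ => binConv p D) (1 - 2*p) x := by
        have h1 : HasDerivAt (fun D : ℝ => p * (1 - D) + D * (1 - p))
            (p * (0 - 1) + (1 * (1 - p))) x :=
          (((hasDerivAt_const x (1:ℝ)).sub (hasDerivAt_id x)).const_mul p).add
            ((hasDerivAt_id x).mul_const (1 - p))
        have : (p * (0 - 1) + (1 * (1 - p))) = 1 - 2*p := by ring
        rw [this] at h1
        exact h1
      have hcomp : HasDerivAt (fun D => binH (binConv p D))
          (((Real.log 2)⁻¹ * (Real.log (1 - c) - Real.log c)) * (1 - 2*p)) x :=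
        by have h := (hasDerivAt_binH (x := c) (ne_of_gt hc0) (by linarith)).comp x hlin; exact h
      have hf : HasDerivAt (fun D => binH (binConv p D) - binH D)
          (((Real.log 2)⁻¹ * (Real.log (1 - c) - Real.log c)) * (1 - 2*p)
            - (Real.log 2)⁻¹ * (Real.log (1 - x) - Real.log x)) x :=
        hcomp.sub (hasDerivAt_binH (ne_of_gt hx0) (by linarith))
      rw [hf.deriv]
      have hφc : 0 < Real.log (1 - c) - Real.log c :=
        sub_pos.mpr (Real.log_lt_log hc0 (by linarith))
      have hl1 : Real.log (1 - c) < Real.log (1 - x) :=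
        Real.log_lt_log (by linarith) (by linarith)
      have hl2 : Real.log x < Real.log c := Real.log_lt_log hx0 hcx
      have key : (1 - 2*p) * (Real.log (1 - c) - Real.log c)
          < Real.log (1 - x) - Real.log x := by nlinarith
      nlinarith [mul_lt_mul_of_pos_left key hc]
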